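/- Let A = (a_{ij}) be an n×n matrix over ℤ with a_{ii} = 0 for all i, and fix 1 ≤ k ≤ n. Define U = I_n − 2E_{kk} + Σ_{j : a_{kj} ≤ 0} |a_{kj}| E_{kj} and W = I_n − 2E_{kk} + Σ_{i : a_{ik} ≥ 0} a_{ik} E_{ik}, where E_{ij} denotes the matrix unit with 1 in position (i,j) and 0 elsewhere. Then the Fomin–Zelevinsky mutation of A in direction k satisfies μ_k(A) = W·A·U. -/

import Mathlib

noncomputable section

namespace MeshMut

variable {ι : Type} [Fintype ι] [DecidableEq ι]

/-- The Fomin–Zelevinsky mutation of a square integer matrix `A` in direction `k`. -/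
def fzMutation (A : Matrix ι ι ℤ) (k : ι) : Matrix ι ι ℤ := fun i j =>
  if i = k ∨ j = k then -A i j
  else A i j + (|A i k| * A k j + A i k * |A k j|) / 2

/-- `U = I − 2·E_{kk} + ∑_{j : a_{kj} ≤ 0} |a_{kj}|·E_{kj}`. -/
def mutU (A : Matrix ι ι ℤ) (k : ι) : Matrix ι ι ℤ :=
  1 - Matrix.single k k (2 : ℤ) +
    ∑ j ∈ Finset.univ.filter (fun j => A k j ≤ 0), Matrix.single k j |A k j|

/-- `W = I − 2·E_{kk} + ∑_{i : a_{ik} ≥ 0} a_{ik}·E_{ik}`. -/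
def mutW (A : Matrix ι ι ℤ) (k : ι) : Matrix ι ι ℤ :=
  1 - Matrix.single k k (2 : ℤ) +
    ∑ i ∈ Finset.univ.filter (fun i => 0 ≤ A i k), Matrix.single i k (A i k)

end MeshMut

section Aux

variable {ι : Type} [Fintype ι] [DecidableEq ι]

lemma mutU_apply (A : Matrix ι ι ℤ) (k i j : ι) :
    MeshMut.mutU A k i j =
      (if i = j then 1 else 0) - (if i = k ∧ j = k then 2 else 0) +
        (if i = k ∧ A k j ≤ 0 then |A k j| else 0) := by
  classical
  simp only [MeshMut.mutU, Matrix.sub_apply, Matrix.add_apply, Matrix.one_apply,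
    Matrix.sum_apply, Matrix.single, Matrix.of_apply]
  by_cases hik : i = k
  · subst hik
    simp [Finset.sum_ite_eq', eq_comm]
  · simp [hik, Ne.symm hik]

lemma mutW_apply (A : Matrix ι ι ℤ) (k i j : ι) :
    MeshMut.mutW A k i j =
      (if i = j then 1 else 0) - (if i = k ∧ j = k then 2 else 0) +
        (if j = k ∧ 0 ≤ A i k then A i k else 0) := by
  classical
  simp only [MeshMut.mutW, Matrix.sub_apply, Matrix.add_apply, Matrix.one_apply,
    Matrix.sum_apply, Matrix.single, Matrix.of_apply]
  by_cases hjk : j = k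
  · subst hjk
    simp [Finset.sum_ite_eq', eq_comm]
  · simp [hjk, Ne.symm hjk]

lemma mutWA_apply (A : Matrix ι ι ℤ) (hdiag : ∀ i, A i i = 0) (k i l : ι) :
    (MeshMut.mutW A k * A) i l =
      if i = k then -A k l
      else A i l + (if 0 ≤ A i k then A i k else 0) * A k l := by
  classical
  rw [Matrix.mul_apply]
  simp only [mutW_apply, sub_mul, add_mul]
  rw [Finset.sum_add_distrib, Finset.sum_sub_distrib]
  have h1 : (∑ m, (if i = m then (1:ℤ) else 0) * A m l) = A i l := by
    simp [ite_mul]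
  have h2 : (∑ m, (if i = k ∧ m = k then (2:ℤ) else 0) * A m l)
      = if i = k then 2 * A k l else 0 := by
    by_cases hik : i = k <;> simp [hik, ite_mul]
  have h3 : (∑ m, (if m = k ∧ 0 ≤ A i k then A i k else 0) * A m l)
      = (if 0 ≤ A i k then A i k else 0) * A k l := by
    by_cases h : 0 ≤ A i k <;> simp [h, ite_mul]
  rw [h1, h2, h3]
  by_cases hik : i = k
  · subst hik
    simp [hdiag]
    ring
  · simp [hik]

end Aux

open MeshMut in
/-- Lemma "matrix mutation": for an `n × n` integer matrix `A` with
zero diagonal and `1 ≤ k ≤ n`, the Fomin–Zelevinsky mutation of `A` in direction `k`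
satisfies `μ_k(A) = W·A·U`. -/
theorem statement_17
    (n : ℕ) (A : Matrix (Fin n) (Fin n) ℤ) (hdiag : ∀ i, A i i = 0) (k : Fin n) :
    fzMutation A k = mutW A k * A * mutU A k := by
  classical
  ext i j
  rw [Matrix.mul_apply]
  simp only [mutU_apply, mutWA_apply A hdiag]
  have hsum : (∑ l, (if i = k then -A k l
        else A i l + (if 0 ≤ A i k then A i k else 0) * A k l) *
        ((if l = j then (1:ℤ) else 0) - (if l = k ∧ j = k then 2 else 0) +
          (if l = k ∧ A k j ≤ 0 then |A k j| else 0)))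
      = (if i = k then -A k j else A i j + (if 0 ≤ A i k then A i k else 0) * A k j)
        - (if j = k then 2 else 0) *
            (if i = k then -A k k else A i k + (if 0 ≤ A i k then A i k else 0) * A k k)
        + (if A k j ≤ 0 then |A k j| else 0) *
            (if i = k then -A k k else A i k + (if 0 ≤ A i k then A i k else 0) * A k k) := by
    simp only [mul_sub, mul_add]
    rw [Finset.sum_add_distrib, Finset.sum_sub_distrib]
    congr 2
    · simp [mul_ite]
    · by_cases hjk : j = k <;> simp [hjk, mul_ite, mul_comm]
    · by_cases h : A k j ≤ 0 <;> simp [h, mul_ite, mul_comm]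
  rw [hsum, hdiag k]
  by_cases hik : i = k
  · subst hik
    by_cases hjk : j = i <;> simp [fzMutation, hjk, hdiag]
  · by_cases hjk : j = k
    · subst hjk
      simp only [fzMutation, hik, or_true, if_true]
      by_cases h : 0 ≤ A i j <;> simp [h, hdiag] <;> ring
    · simp only [fzMutation, hik, hjk, or_self, if_false, mul_zero, add_zero, sub_zero]
      have key : (|A i k| * A k j + A i k * |A k j|) / 2
          = (if 0 ≤ A i k then A i k else 0) * A k j
            + (if A k j ≤ 0 then |A k j| else 0) * A i k := by
        rcases le_or_gt 0 (A i k) with hx | hx <;>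
          rcases le_or_gt (A k j) 0 with hy | hy
        · rw [abs_of_nonneg hx, abs_of_nonpos hy, if_pos hx, if_pos hy]
          have h0 : A i k * A k j + A i k * -A k j = 0 := by ring
          rw [h0]
          simp only [Int.zero_ediv]
          ring
        · rw [abs_of_nonneg hx, abs_of_nonneg hy.le, if_pos hx, if_neg (not_le.mpr hy)]
          have h0 : A i k * A k j + A i k * A k j = 2 * (A i k * A k j) := by ring
          rw [h0, Int.mul_ediv_cancel_left _ two_ne_zero]
          ring
        · rw [abs_of_nonpos hx.le, abs_of_nonpos hy, if_neg (not_le.mpr hx), if_pos hy]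
          have h0 : -A i k * A k j + A i k * -A k j = 2 * (-(A i k * A k j)) := by ring
          rw [h0, Int.mul_ediv_cancel_left _ two_ne_zero]
          ring
        · rw [abs_of_nonpos hx.le, abs_of_nonneg hy.le,
            if_neg (not_le.mpr hx), if_neg (not_le.mpr hy)]
          have h0 : -A i k * A k j + A i k * A k j = 0 := by ring
          rw [h0]
          simp
      rw [key]
      ring
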